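/- Consider the power network η̇ = B_gᵀω_g + B_lᵀD_l⁻¹(−B_lΓ sin(η) − P_l), M ω̇_g = −D_g ω_g − B_g Γ sin(η) + P_m, with ω_l = D_l⁻¹(−B_lΓ sin(η) − P_l), where the generator index set {1,…,n_g} is partitioned into V_{g1} and V_{g2}. For i ∈ V_{g1}: T_{mi}Ṗ_{mi} = −P_{mi} − K_i⁻¹ω_{gi} + θ_i and T_{θi}θ̇_i = −θ_i + P_{mi} − K_i⁻¹(Q L (Qθ + R))_i; for i ∈ V_{g2}: T_{si}Ṗ_{si} = −P_{si} − K_i⁻¹ω_{gi} + θ_i, T_{mi}Ṗ_{mi} = −P_{mi} + P_{si}, and T_{θi}θ̇_i = −θ_i + P_{si} − (1 − K_i⁻¹)ω_{gi} − (Q L (Qθ + R))_i; all time constants, droop constants K_i, and damping constants are positive, L is symmetric positive semidefinite with L·1 = 0, and Q is diagonal positive with R ∈ ℝ^{n_g}. Let (η̄, ω̄_g = 0, P̄_m = P̄_s = θ̄) be a steady state of the closed loop with Qθ̄ + R ∈ span{1}. Then along every differentiable solution, the derivative of V = U + Σ_{i∈V_{g1}} Z_{1i} + Σ_{i∈V_{g2}}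 Z_{2i} equals −ω_lᵀD_lω_l + Σ_{i∈V_{g1}}(−D_{gi}ω_{gi}² − K_i(θ_i − P_{mi})²) + Σ_{i∈V_{g2}} v_iᵀ W_i v_i − (Q(θ − θ̄))ᵀ L (Q(θ − θ̄)), where v_i = (ω_{gi}, P_{si} − P_{mi}, P_{si} − θ_i)ᵀ and W_i is the symmetric matrix with rows (−D_{gi}, −½K_i⁻¹ − ½, −½K_i⁻¹ + ½), (−½K_i⁻¹ − ½, −T_{si}/T_{mi}, −½), (−½K_i⁻¹ + ½, −½, −1); in particular, if each W_i for i ∈ V_{g2} is negative definite, then this derivative is ≤ 0 for all t. -/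

import Mathlib

open Matrix

private lemma sum_swap_mul {α β : Type*} [Fintype α] [Fintype β]
    (c : β → ℝ) (b : α → β → ℝ) (a : α → ℝ) :
    ∑ k, c k * ∑ i, b i k * a i = ∑ i, a i * ∑ k, b i k * c k := by
  simp_rw [Finset.mul_sum]
  rw [Finset.sum_comm]
  exact Finset.sum_congr rfl fun i _ => Finset.sum_congr rfl fun k _ => by ring

private lemma z1_term (Tθ Tm Kk Qi Dgi th tb p w Λ : ℝ)
    (hTθ : Tθ ≠ 0) (hTm : Tm ≠ 0) (hK : Kk ≠ 0) :
    Tθ * Kk / 2 * (2 * (th - tb) * ((-th + p - Kk⁻¹ * (Qi * Λ)) / Tθ))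
      + Tm * Kk / 2 * (2 * (p - tb) * ((-p - Kk⁻¹ * w + th) / Tm))
    = (-(Dgi * w^2) - Kk * (th - p)^2) - (-(Dgi * w^2) + w * (p - tb)) - Qi * (th - tb) * Λ := by
  field_simp
  ring

private lemma z2_term (Tθ Tm Ts Kk Qi Dgi th tb p s w Λ : ℝ)
    (hTθ : Tθ ≠ 0) (hTm : Tm ≠ 0) (hTs : Ts ≠ 0) (hK : Kk ≠ 0) :
    Tθ / 2 * (2 * (th - tb) * ((-th + s - (1 - Kk⁻¹) * w - Qi * Λ) / Tθ))
      + Ts / 2 * (2 * (s - tb) * ((-s - Kk⁻¹ * w + th) / Ts))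
      + Ts / 2 * (2 * (p - s) * ((-p + s) / Tm - (-s - Kk⁻¹ * w + th) / Ts))
    = (-(Dgi * w^2) - Ts / Tm * (s - p)^2 - (s - th)^2 - (Kk⁻¹ + 1) * (w * (s - p))
        + (1 - Kk⁻¹) * (w * (s - th)) - (s - p) * (s - th))
      - (-(Dgi * w^2) + w * (p - tb)) - Qi * (th - tb) * Λ := by
  field_simp
  ring

/-- Dissipation identity for the closed loop of the power network, first- and
second-order turbine-governors and the distributed consensus-based controllers:
the derivative of `V = U + Σ Z₁ᵢ + Σ Z₂ᵢ` equals the stated expression, which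
is nonpositive whenever each `Wᵢ`, `i ∈ V_{g2}`, is negative definite. -/
theorem closed_loop_dissipation {m ng nl : ℕ}
    (M Dg K Tθ Tm Ts Q R : Fin ng → ℝ) (Dl : Fin nl → ℝ) (γ : Fin m → ℝ)
    (Pl : Fin nl → ℝ)
    (hM : ∀ i, 0 < M i) (hDg : ∀ i, 0 < Dg i) (hK : ∀ i, 0 < K i)
    (hTθ : ∀ i, 0 < Tθ i) (hTm : ∀ i, 0 < Tm i) (hTs : ∀ i, 0 < Ts i)
    (hQ : ∀ i, 0 < Q i) (hDl : ∀ j, 0 < Dl j) (hγ : ∀ k, 0 < γ k)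
    (Bg : Matrix (Fin ng) (Fin m) ℝ) (Bl : Matrix (Fin nl) (Fin m) ℝ)
    (L : Matrix (Fin ng) (Fin ng) ℝ) (hL : L.PosSemidef)
    (hL1 : L *ᵥ (fun _ => (1 : ℝ)) = 0)
    (Vg1 : Finset (Fin ng))
    (η : ℝ → Fin m → ℝ) (ωg Pm Ps θ : ℝ → Fin ng → ℝ) (ωl : ℝ → Fin nl → ℝ)
    -- ω_l = D_l⁻¹(−B_l Γ sin(η) − P_l) :
    (hωl : ∀ t j, ωl t j
      = (-(∑ k, Bl j k * (γ k * Real.sin (η t k))) - Pl j) / Dl j)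
    -- η̇ = B_gᵀ ω_g + B_lᵀ ω_l :
    (hη : ∀ t, HasDerivAt η
      (fun k => (∑ i, Bg i k * ωg t i) + ∑ j, Bl j k * ωl t j) t)
    -- M ω̇_g = −D_g ω_g − B_g Γ sin(η) + P_m :
    (hωg : ∀ t, HasDerivAt ωg
      (fun i => (-(Dg i * ωg t i)
        - (∑ k, Bg i k * (γ k * Real.sin (η t k))) + Pm t i) / M i) t)
    -- first-order turbine-governors with controllers, i ∈ V_{g1} :
    (hPm1 : ∀ t, ∀ i ∈ Vg1, HasDerivAt (fun s => Pm s i)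
      ((-(Pm t i) - (K i)⁻¹ * ωg t i + θ t i) / Tm i) t)
    (hθ1 : ∀ t, ∀ i ∈ Vg1, HasDerivAt (fun s => θ s i)
      ((-(θ t i) + Pm t i
        - (K i)⁻¹ * (Q i * ∑ j, L i j * (Q j * θ t j + R j))) / Tθ i) t)
    -- second-order turbine-governors with controllers, i ∈ V_{g2} = V_{g1}ᶜ :
    (hPs2 : ∀ t, ∀ i ∈ Vg1ᶜ, HasDerivAt (fun s => Ps s i)
      ((-(Ps t i) - (K i)⁻¹ * ωg t i + θ t i) / Ts i) t)
    (hPm2 : ∀ t, ∀ i ∈ Vg1ᶜ, HasDerivAt (fun s => Pm s i)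
      ((-(Pm t i) + Ps t i) / Tm i) t)
    (hθ2 : ∀ t, ∀ i ∈ Vg1ᶜ, HasDerivAt (fun s => θ s i)
      ((-(θ t i) + Ps t i - (1 - (K i)⁻¹) * ωg t i
        - Q i * ∑ j, L i j * (Q j * θ t j + R j)) / Tθ i) t)
    -- steady state (η̄, ω̄ = 0, P̄_m = P̄_s = θ̄) with identical marginal costs :
    (ηb : Fin m → ℝ) (θb : Fin ng → ℝ)
    (hssg : ∀ i, 0 = -(∑ k, Bg i k * (γ k * Real.sin (ηb k))) + θb i)
    (hssl : ∀ j, 0 = -(∑ k, Bl j k * (γ k * Real.sin (ηb k))) - Pl j)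
    (hmc : ∃ c : ℝ, ∀ i, Q i * θb i + R i = c)
    -- V = U + Σ_{i ∈ V_{g1}} Z₁ᵢ + Σ_{i ∈ V_{g2}} Z₂ᵢ :
    (V : ℝ → ℝ)
    (hV : ∀ t, V t =
      ((1/2) * (∑ i, M i * (ωg t i)^2) - (∑ k, γ k * Real.cos (η t k))
        + (∑ k, γ k * Real.cos (ηb k))
        - ∑ k, γ k * Real.sin (ηb k) * (η t k - ηb k))
      + (∑ i ∈ Vg1, (Tθ i * K i / 2 * (θ t i - θb i)^2
          + Tm i * K i / 2 * (Pm t i - θb i)^2))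
      + ∑ i ∈ Vg1ᶜ, (Tθ i / 2 * (θ t i - θb i)^2
          + Ts i / 2 * (Ps t i - θb i)^2 + Ts i / 2 * (Pm t i - Ps t i)^2))
    (Wmat : Fin ng → Matrix (Fin 3) (Fin 3) ℝ)
    (hW : ∀ i, Wmat i
      = !![-Dg i,              -((K i)⁻¹/2) - 1/2, -((K i)⁻¹/2) + 1/2;
           -((K i)⁻¹/2) - 1/2, -(Ts i / Tm i),     -(1/2);
           -((K i)⁻¹/2) + 1/2, -(1/2),             -1])
    (rhs : ℝ → ℝ)
    (hrhs : ∀ t, rhs t =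
      -(∑ j, Dl j * (ωl t j)^2)
      + (∑ i ∈ Vg1, (-(Dg i * (ωg t i)^2) - K i * (θ t i - Pm t i)^2))
      + (∑ i ∈ Vg1ᶜ, (![ωg t i, Ps t i - Pm t i, Ps t i - θ t i] ⬝ᵥ
          (Wmat i *ᵥ ![ωg t i, Ps t i - Pm t i, Ps t i - θ t i])))
      - (fun i => Q i * (θ t i - θb i)) ⬝ᵥ (L *ᵥ fun i => Q i * (θ t i - θb i))) :
    (∀ t, HasDerivAt V (rhs t) t) ∧
      ((∀ i ∈ Vg1ᶜ, ∀ w : Fin 3 → ℝ, w ≠ 0 → w ⬝ᵥ (Wmat i *ᵥ w) < 0) →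
        ∀ t, rhs t ≤ 0) := by
  constructor
  · intro t
    have hηk : ∀ k, HasDerivAt (fun s => η s k)
        ((∑ i, Bg i k * ωg t i) + ∑ j, Bl j k * ωl t j) t :=
      fun k => hasDerivAt_pi.mp (hη t) k
    have hwk : ∀ i, HasDerivAt (fun s => ωg s i)
        ((-(Dg i * ωg t i) - (∑ k, Bg i k * (γ k * Real.sin (η t k))) + Pm t i) / M i) t :=
      fun i => hasDerivAt_pi.mp (hωg t) i
    -- derivatives of the pieces of V
    have h1 : HasDerivAt (fun s => (1/2 : ℝ) * (∑ i, M i * (ωg s i)^2))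
        ((1/2 : ℝ) * ∑ i, M i * (2 * ωg t i *
          ((-(Dg i * ωg t i) - (∑ k, Bg i k * (γ k * Real.sin (η t k))) + Pm t i) / M i))) t := by
      refine HasDerivAt.const_mul _ (HasDerivAt.fun_sum fun i _ => ?_)
      have h := ((hwk i).fun_pow 2).const_mul (M i)
      convert h using 1
      rfl
      ring
    have h2 : HasDerivAt (fun s => ∑ k, γ k * Real.cos (η s k))
        (∑ k, γ k * (-Real.sin (η t k) *
          ((∑ i, Bg i k * ωg t i) + ∑ j, Bl j k * ωl t j))) t :=
      HasDerivAt.fun_sum fun k _ => ((hηk k).cos).const_mul (γ k)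
    have h4 : HasDerivAt (fun s => ∑ k, γ k * Real.sin (ηb k) * (η s k - ηb k))
        (∑ k, γ k * Real.sin (ηb k) *
          ((∑ i, Bg i k * ωg t i) + ∑ j, Bl j k * ωl t j)) t :=
      HasDerivAt.fun_sum fun k _ => ((hηk k).sub_const (ηb k)).const_mul (γ k * Real.sin (ηb k))
    have hZ1 : HasDerivAt
        (fun s => ∑ i ∈ Vg1, (Tθ i * K i / 2 * (θ s i - θb i)^2
          + Tm i * K i / 2 * (Pm s i - θb i)^2))
        (∑ i ∈ Vg1, (Tθ i * K i / 2 * (2 * (θ t i - θb i) *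
            ((-(θ t i) + Pm t i
              - (K i)⁻¹ * (Q i * ∑ j, L i j * (Q j * θ t j + R j))) / Tθ i))
          + Tm i * K i / 2 * (2 * (Pm t i - θb i) *
            ((-(Pm t i) - (K i)⁻¹ * ωg t i + θ t i) / Tm i)))) t := by
      refine HasDerivAt.fun_sum fun i hi => HasDerivAt.add ?_ ?_
      · have h := (((hθ1 t i hi).sub_const (θb i)).fun_pow 2).const_mul (Tθ i * K i / 2)
        convert h using 1
        rfl
        ring
      · have h := (((hPm1 t i hi).sub_const (θb i)).fun_pow 2).const_mul (Tm i * K i / 2)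
        convert h using 1
        rfl
        ring
    have hZ2 : HasDerivAt
        (fun s => ∑ i ∈ Vg1ᶜ, (Tθ i / 2 * (θ s i - θb i)^2
          + Ts i / 2 * (Ps s i - θb i)^2 + Ts i / 2 * (Pm s i - Ps s i)^2))
        (∑ i ∈ Vg1ᶜ, (Tθ i / 2 * (2 * (θ t i - θb i) *
            ((-(θ t i) + Ps t i - (1 - (K i)⁻¹) * ωg t i
              - Q i * ∑ j, L i j * (Q j * θ t j + R j)) / Tθ i))
          + Ts i / 2 * (2 * (Ps t i - θb i) *
            ((-(Ps t i) - (K i)⁻¹ * ωg t i + θ t i) / Ts i))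
          + Ts i / 2 * (2 * (Pm t i - Ps t i) *
            ((-(Pm t i) + Ps t i) / Tm i
              - (-(Ps t i) - (K i)⁻¹ * ωg t i + θ t i) / Ts i)))) t := by
      refine HasDerivAt.fun_sum fun i hi => HasDerivAt.add (HasDerivAt.add ?_ ?_) ?_
      · have h := (((hθ2 t i hi).sub_const (θb i)).fun_pow 2).const_mul (Tθ i / 2)
        convert h using 1
        rfl
        ring
      · have h := (((hPs2 t i hi).sub_const (θb i)).fun_pow 2).const_mul (Ts i / 2)
        convert h using 1
        rfl
        ring
      · have h := (((hPm2 t i hi).fun_sub (hPs2 t i hi)).fun_pow 2).const_mul (Ts i / 2)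
        convert h using 1
        rfl
        ring
    have hD := ((((h1.sub h2).add_const (∑ k, γ k * Real.cos (ηb k))).sub h4).add hZ1).add hZ2
    -- algebraic facts
    obtain ⟨c, hc⟩ := hmc
    have hLrow : ∀ i, (∑ j, L i j) = 0 := by
      intro i
      have h := congrFun hL1 i
      simpa [Matrix.mulVec, dotProduct] using h
    have hLQ : ∀ i, (∑ j, L i j * (Q j * θ t j + R j))
        = ∑ j, L i j * (Q j * (θ t j - θb j)) := by
      intro i
      have h1' : ∑ j, L i j * (Q j * θ t j + R j)
          = ∑ j, (L i j * (Q j * (θ t j - θb j)) + L i j * c) := by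
        refine Finset.sum_congr rfl fun j _ => ?_
        linear_combination L i j * hc j
      rw [h1', Finset.sum_add_distrib, ← Finset.sum_mul, hLrow i]
      ring
    have hBgb : ∀ i, ∑ k, Bg i k * (γ k * Real.sin (ηb k)) = θb i := fun i => by
      linarith [hssg i]
    have hBlb : ∀ j, ∑ k, Bl j k * (γ k * Real.sin (ηb k)) = -Pl j := fun j => by
      linarith [hssl j]
    have hBle : ∀ j, ∑ k, Bl j k * (γ k * Real.sin (η t k)) = -(Dl j * ωl t j) - Pl j := by
      intro j
      have h := hωl t j
      rw [eq_div_iff (hDl j).ne'] at h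
      linear_combination h
    have hsplit : ∀ c' : Fin m → ℝ,
        ∑ k, c' k * ((∑ i, Bg i k * ωg t i) + ∑ j, Bl j k * ωl t j)
          = (∑ i, ωg t i * ∑ k, Bg i k * c' k) + ∑ j, ωl t j * ∑ k, Bl j k * c' k := by
      intro c'
      simp_rw [mul_add]
      rw [Finset.sum_add_distrib, sum_swap_mul c' Bg (ωg t), sum_swap_mul c' Bl (ωl t)]
    have hc1 : ∑ k, γ k * Real.sin (η t k) * ((∑ i, Bg i k * ωg t i) + ∑ j, Bl j k * ωl t j)
        = (∑ i, ωg t i * ∑ k, Bg i k * (γ k * Real.sin (η t k)))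
          + ∑ j, ωl t j * ∑ k, Bl j k * (γ k * Real.sin (η t k)) := hsplit _
    have hc2 : ∑ k, γ k * Real.sin (ηb k) * ((∑ i, Bg i k * ωg t i) + ∑ j, Bl j k * ωl t j)
        = (∑ i, ωg t i * ∑ k, Bg i k * (γ k * Real.sin (ηb k)))
          + ∑ j, ωl t j * ∑ k, Bl j k * (γ k * Real.sin (ηb k)) := hsplit _
    simp only [hBle] at hc1
    simp only [hBgb, hBlb] at hc2
    have eA : (1/2 : ℝ) * ∑ i, M i * (2 * ωg t i *
          ((-(Dg i * ωg t i) - (∑ k, Bg i k * (γ k * Real.sin (η t k))) + Pm t i) / M i))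
        = ∑ i, ωg t i * (-(Dg i * ωg t i)
            - (∑ k, Bg i k * (γ k * Real.sin (η t k))) + Pm t i) := by
      rw [Finset.mul_sum]
      refine Finset.sum_congr rfl fun i _ => ?_
      field_simp [(hM i).ne']
    have eNeg : ∑ k, γ k * (-Real.sin (η t k) *
          ((∑ i, Bg i k * ωg t i) + ∑ j, Bl j k * ωl t j))
        = -∑ k, γ k * Real.sin (η t k) *
            ((∑ i, Bg i k * ωg t i) + ∑ j, Bl j k * ωl t j) := by
      rw [← Finset.sum_neg_distrib]
      exact Finset.sum_congr rfl fun k _ => by ring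
    have hcomb :
        (∑ i, ωg t i * (-(Dg i * ωg t i)
            - (∑ k, Bg i k * (γ k * Real.sin (η t k))) + Pm t i))
        + (∑ i, ωg t i * ∑ k, Bg i k * (γ k * Real.sin (η t k)))
        - ∑ i, ωg t i * θb i
        = ∑ i, (-(Dg i * (ωg t i)^2) + ωg t i * (Pm t i - θb i)) := by
      rw [← Finset.sum_add_distrib, ← Finset.sum_sub_distrib]
      exact Finset.sum_congr rfl fun i _ => by ring
    have hcombl : (∑ j, ωl t j * (-(Dl j * ωl t j) - Pl j)) - ∑ j, ωl t j * (-Pl j)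
        = -∑ j, Dl j * (ωl t j)^2 := by
      rw [← Finset.sum_sub_distrib, ← Finset.sum_neg_distrib]
      exact Finset.sum_congr rfl fun j _ => by ring
    have edU : (1/2 : ℝ) * ∑ i, M i * (2 * ωg t i *
          ((-(Dg i * ωg t i) - (∑ k, Bg i k * (γ k * Real.sin (η t k))) + Pm t i) / M i))
        - ∑ k, γ k * (-Real.sin (η t k) *
            ((∑ i, Bg i k * ωg t i) + ∑ j, Bl j k * ωl t j))
        - ∑ k, γ k * Real.sin (ηb k) *
            ((∑ i, Bg i k * ωg t i) + ∑ j, Bl j k * ωl t j)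
        = (∑ i, (-(Dg i * (ωg t i)^2) + ωg t i * (Pm t i - θb i)))
          - ∑ j, Dl j * (ωl t j)^2 := by
      rw [eA, eNeg, hc1, hc2]
      linear_combination hcomb + hcombl
    have edZ1 : ∑ i ∈ Vg1, (Tθ i * K i / 2 * (2 * (θ t i - θb i) *
          ((-(θ t i) + Pm t i
            - (K i)⁻¹ * (Q i * ∑ j, L i j * (Q j * θ t j + R j))) / Tθ i))
        + Tm i * K i / 2 * (2 * (Pm t i - θb i) *
          ((-(Pm t i) - (K i)⁻¹ * ωg t i + θ t i) / Tm i)))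
        = (∑ i ∈ Vg1, (-(Dg i * (ωg t i)^2) - K i * (θ t i - Pm t i)^2))
          - (∑ i ∈ Vg1, (-(Dg i * (ωg t i)^2) + ωg t i * (Pm t i - θb i)))
          - ∑ i ∈ Vg1, Q i * (θ t i - θb i) * ∑ j, L i j * (Q j * (θ t j - θb j)) := by
      rw [← Finset.sum_sub_distrib, ← Finset.sum_sub_distrib]
      refine Finset.sum_congr rfl fun i _ => ?_
      rw [hLQ i]
      exact z1_term (Tθ i) (Tm i) (K i) (Q i) (Dg i) (θ t i) (θb i) (Pm t i) (ωg t i)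
        _ (hTθ i).ne' (hTm i).ne' (hK i).ne'
    have edZ2 : ∑ i ∈ Vg1ᶜ, (Tθ i / 2 * (2 * (θ t i - θb i) *
          ((-(θ t i) + Ps t i - (1 - (K i)⁻¹) * ωg t i
            - Q i * ∑ j, L i j * (Q j * θ t j + R j)) / Tθ i))
        + Ts i / 2 * (2 * (Ps t i - θb i) *
          ((-(Ps t i) - (K i)⁻¹ * ωg t i + θ t i) / Ts i))
        + Ts i / 2 * (2 * (Pm t i - Ps t i) *
          ((-(Pm t i) + Ps t i) / Tm i
            - (-(Ps t i) - (K i)⁻¹ * ωg t i + θ t i) / Ts i)))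
        = (∑ i ∈ Vg1ᶜ, (-(Dg i * (ωg t i)^2) - Ts i / Tm i * (Ps t i - Pm t i)^2
            - (Ps t i - θ t i)^2 - ((K i)⁻¹ + 1) * (ωg t i * (Ps t i - Pm t i))
            + (1 - (K i)⁻¹) * (ωg t i * (Ps t i - θ t i))
            - (Ps t i - Pm t i) * (Ps t i - θ t i)))
          - (∑ i ∈ Vg1ᶜ, (-(Dg i * (ωg t i)^2) + ωg t i * (Pm t i - θb i)))
          - ∑ i ∈ Vg1ᶜ, Q i * (θ t i - θb i) * ∑ j, L i j * (Q j * (θ t j - θb j)) := by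
      rw [← Finset.sum_sub_distrib, ← Finset.sum_sub_distrib]
      refine Finset.sum_congr rfl fun i _ => ?_
      rw [hLQ i]
      exact z2_term (Tθ i) (Tm i) (Ts i) (K i) (Q i) (Dg i) (θ t i) (θb i) (Pm t i) (Ps t i)
        (ωg t i) _ (hTθ i).ne' (hTm i).ne' (hTs i).ne' (hK i).ne'
    have hXwsum : (∑ i ∈ Vg1ᶜ, (![ωg t i, Ps t i - Pm t i, Ps t i - θ t i] ⬝ᵥ
          (Wmat i *ᵥ ![ωg t i, Ps t i - Pm t i, Ps t i - θ t i])))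
        = ∑ i ∈ Vg1ᶜ, (-(Dg i * (ωg t i)^2) - Ts i / Tm i * (Ps t i - Pm t i)^2
            - (Ps t i - θ t i)^2 - ((K i)⁻¹ + 1) * (ωg t i * (Ps t i - Pm t i))
            + (1 - (K i)⁻¹) * (ωg t i * (Ps t i - θ t i))
            - (Ps t i - Pm t i) * (Ps t i - θ t i)) := by
      refine Finset.sum_congr rfl fun i _ => ?_
      rw [hW i]
      simp [Matrix.mulVec, dotProduct, Fin.sum_univ_three]
      ring
    have hdotL : (fun i => Q i * (θ t i - θb i)) ⬝ᵥ (L *ᵥ fun i => Q i * (θ t i - θb i))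
        = ∑ i, Q i * (θ t i - θb i) * ∑ j, L i j * (Q j * (θ t j - θb j)) := by
      simp [Matrix.mulVec, dotProduct]
    have hHsplit := Finset.sum_add_sum_compl Vg1
      (fun i => -(Dg i * (ωg t i)^2) + ωg t i * (Pm t i - θb i))
    have hGsplit := Finset.sum_add_sum_compl Vg1
      (fun i => Q i * (θ t i - θb i) * ∑ j, L i j * (Q j * (θ t j - θb j)))
    have key : rhs t = (1/2 : ℝ) * ∑ i, M i * (2 * ωg t i *
          ((-(Dg i * ωg t i) - (∑ k, Bg i k * (γ k * Real.sin (η t k))) + Pm t i) / M i))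
        - ∑ k, γ k * (-Real.sin (η t k) *
            ((∑ i, Bg i k * ωg t i) + ∑ j, Bl j k * ωl t j))
        - ∑ k, γ k * Real.sin (ηb k) *
            ((∑ i, Bg i k * ωg t i) + ∑ j, Bl j k * ωl t j)
        + ∑ i ∈ Vg1, (Tθ i * K i / 2 * (2 * (θ t i - θb i) *
            ((-(θ t i) + Pm t i
              - (K i)⁻¹ * (Q i * ∑ j, L i j * (Q j * θ t j + R j))) / Tθ i))
          + Tm i * K i / 2 * (2 * (Pm t i - θb i) *
            ((-(Pm t i) - (K i)⁻¹ * ωg t i + θ t i) / Tm i)))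
        + ∑ i ∈ Vg1ᶜ, (Tθ i / 2 * (2 * (θ t i - θb i) *
            ((-(θ t i) + Ps t i - (1 - (K i)⁻¹) * ωg t i
              - Q i * ∑ j, L i j * (Q j * θ t j + R j)) / Tθ i))
          + Ts i / 2 * (2 * (Ps t i - θb i) *
            ((-(Ps t i) - (K i)⁻¹ * ωg t i + θ t i) / Ts i))
          + Ts i / 2 * (2 * (Pm t i - Ps t i) *
            ((-(Pm t i) + Ps t i) / Tm i
              - (-(Ps t i) - (K i)⁻¹ * ωg t i + θ t i) / Ts i))) := by
      rw [hrhs]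
      linear_combination -edU - edZ1 - edZ2 + hHsplit + hGsplit - hdotL + hXwsum
    rw [show V = _ from funext hV, key]
    exact hD
  · intro hWneg t
    rw [hrhs]
    have t1 : -(∑ j, Dl j * (ωl t j)^2) ≤ 0 := by
      refine neg_nonpos.mpr (Finset.sum_nonneg fun j _ => ?_)
      exact mul_nonneg (hDl j).le (sq_nonneg _)
    have t2 : (∑ i ∈ Vg1, (-(Dg i * (ωg t i)^2) - K i * (θ t i - Pm t i)^2)) ≤ 0 := by
      refine Finset.sum_nonpos fun i _ => ?_
      have h1 := mul_nonneg (hDg i).le (sq_nonneg (ωg t i))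
      have h2 := mul_nonneg (hK i).le (sq_nonneg (θ t i - Pm t i))
      linarith
    have t3 : (∑ i ∈ Vg1ᶜ, (![ωg t i, Ps t i - Pm t i, Ps t i - θ t i] ⬝ᵥ
          (Wmat i *ᵥ ![ωg t i, Ps t i - Pm t i, Ps t i - θ t i]))) ≤ 0 := by
      refine Finset.sum_nonpos fun i hi => ?_
      by_cases hv : (![ωg t i, Ps t i - Pm t i, Ps t i - θ t i] : Fin 3 → ℝ) = 0
      · rw [hv]; simp
      · exact (hWneg i hi _ hv).le
    have t4 : 0 ≤ (fun i => Q i * (θ t i - θb i)) ⬝ᵥ (L *ᵥ fun i => Q i * (θ t i - θb i)) := by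
      simpa using hL.dotProduct_mulVec_nonneg (fun i => Q i * (θ t i - θb i))
    linarith
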